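/- arXiv:1707.03888 — 3 statements merged into one kernel-verified Lean document; each statement's English description precedes it below -/
import Mathlib

section
/- Let G and H be graphs with |V(G)| = n ≥ 2 and V(H) = {u_1, …, u_k}, and let q ≤ k be an integer such that {u_{k−q+1}, …, u_k} is an independent set in H. If F is a minor of the tree-like product T(G,H) and F is (k−q+1)-connected, then there exists a set X ⊆ V(F) with |X| ≤ k−q such that F − X is a minor of G. -/
open SimpleGraph

/-- `F` is a minor of `G`: branch decomposition formulation. -/
def IsMinor {α : Type*} {β : Type*} (F : SimpleGraph α) (G : SimpleGraph β) : Prop :=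
  ∃ f : α → Set β,
    (∀ a, (f a).Nonempty) ∧
    (∀ a, (G.induce (f a)).Connected) ∧
    (∀ a a', a ≠ a' → Disjoint (f a) (f a')) ∧
    ∀ ⦃a a'⦄, F.Adj a a' → ∃ x ∈ f a, ∃ y ∈ f a', G.Adj x y

/-- Planarity, via Wagner's characterization. -/
def IsPlanar {β : Type*} (G : SimpleGraph β) : Prop :=
  ¬ IsMinor (⊤ : SimpleGraph (Fin 5)) G ∧
  ¬ IsMinor (completeBipartiteGraph (Fin 3) (Fin 3)) G

/-- `G` is `t`-apex: deleting at most `t` vertices leaves a planar graph. -/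
def IsApex (t : ℕ) {β : Type*} (G : SimpleGraph β) : Prop :=
  ∃ X : Set β, X.Finite ∧ X.ncard ≤ t ∧ IsPlanar (G.induce Xᶜ)

/-- `G` is `k`-connected. -/
def IsKConnected (k : ℕ) {β : Type*} [Fintype β] (G : SimpleGraph β) : Prop :=
  k < Fintype.card β ∧
  ∀ X : Finset β, X.card < k → (G.induce ((↑X : Set β)ᶜ)).Connected

/-- Vertices of the tree-like product `T(G,H)`: a vertex of the copy `G_x`
is encoded by the path from the root to the non-leaf tree vertex `x`
(a sequence of vertices of `G` of length `< k`) together with a vertex of `G`. -/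
abbrev TPVert (V : Type*) (k : ℕ) : Type _ := (Σ i : Fin k, (Fin i → V)) × V

/-- The tree-like product `T(G,H)` of `G` with a graph `H` on the ordered
vertex set `Fin k`. -/
def treeProd {V : Type*} (G : SimpleGraph V) {k : ℕ} (H : SimpleGraph (Fin k)) :
    SimpleGraph (TPVert V k) :=
  SimpleGraph.fromRel (fun a b =>
    (a.1 = b.1 ∧ G.Adj a.2 b.2) ∨
    (∃ hij : (a.1.1 : ℕ) < (b.1.1 : ℕ),
      (∀ t : Fin a.1.1, a.1.2 t = b.1.2 ⟨t, t.2.trans hij⟩) ∧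
      a.2 = b.1.2 ⟨a.1.1, hij⟩ ∧
      H.Adj a.1.1 b.1.1))

/-- The `p`-blowup of a graph on `Fin m`, with the blowup classes consecutive. -/
def blowupFin {m : ℕ} (H0 : SimpleGraph (Fin m)) (p : ℕ) : SimpleGraph (Fin (m * p)) where
  Adj i j := ∃ (hi : (i : ℕ) / p < m) (hj : (j : ℕ) / p < m),
    H0.Adj ⟨(i : ℕ) / p, hi⟩ ⟨(j : ℕ) / p, hj⟩
  symm := by constructor; rintro i j ⟨hi, hj, h⟩; exact ⟨hj, hi, h.symm⟩
  loopless := by constructor; rintro i ⟨hi, hj, h⟩; exact H0.irrefl h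

/-- The strong `p`-blowup of a graph. -/
def strongBlowup {W : Type*} (H0 : SimpleGraph W) (p : ℕ) : SimpleGraph (W × Fin p) where
  Adj a b := H0.Adj a.1 b.1 ∨ (a.1 = b.1 ∧ a.2 ≠ b.2)
  symm := by
    constructor
    rintro a b (h | ⟨h1, h2⟩)
    · exact Or.inl h.symm
    · exact Or.inr ⟨h1.symm, h2.symm⟩
  loopless := by constructor; rintro a (h | ⟨_, h⟩); exact H0.irrefl h; exact h rfl

/-- An `(a : b)`-coloring of `G`. -/
def HasFracColoring {W : Type*} (G : SimpleGraph W) (a b : ℕ) : Prop :=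
  ∃ f : W → Finset (Fin a), (∀ w, (f w).card = b) ∧
    ∀ ⦃x y⦄, G.Adj x y → Disjoint (f x) (f y)

/-- The fractional chromatic number. -/
noncomputable def fracChrom {W : Type*} (G : SimpleGraph W) : ℝ :=
  sInf {q : ℝ | ∃ a b : ℕ, 0 < b ∧ HasFracColoring G a b ∧ q = (a : ℝ) / (b : ℝ)}
section Helpers

variable {V : Type*} {k : ℕ}

/-- level of a vertex -/
abbrev lv (z : TPVert V k) : ℕ := z.1.1

/-- full path of a vertex -/
def fp (z : TPVert V k) (t : ℕ) : V := if h : t < lv z then z.1.2 ⟨t, h⟩ else z.2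

lemma fp_lt {z : TPVert V k} {t : ℕ} (h : t < lv z) : fp z t = z.1.2 ⟨t, h⟩ := dif_pos h

lemma fp_ge {z : TPVert V k} {t : ℕ} (h : lv z ≤ t) : fp z t = z.2 := dif_neg (not_lt.2 h)

lemma vert_ext {z z' : TPVert V k} (h1 : lv z = lv z')
    (h2 : ∀ t ≤ lv z, fp z t = fp z' t) : z = z' := by
  obtain ⟨⟨i, p⟩, v⟩ := z
  obtain ⟨⟨i', p'⟩, v'⟩ := z'
  have hi : i = i' := Fin.ext h1
  subst hi
  have hp : p = p' := by
    funext t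
    have := h2 t t.2.le
    rw [fp_lt t.2, fp_lt t.2] at this
    simpa using this
  subst hp
  have hv : v = v' := by
    have := h2 (i : ℕ) le_rfl
    rwa [fp_ge le_rfl, fp_ge le_rfl] at this
  subst hv
  rfl

lemma copy_fp {a b : TPVert V k} (h : a.1 = b.1) {t : ℕ} (ht : t < lv a) :
    fp a t = fp b t := by
  obtain ⟨⟨i, p⟩, v⟩ := a
  obtain ⟨⟨i', p'⟩, v'⟩ := b
  cases h
  rw [fp_lt ht]
  exact (@fp_lt V k (⟨i, p⟩, v') t ht).symm

lemma copy_lv {a b : TPVert V k} (h : a.1 = b.1) : lv a = lv b := by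
  exact congrArg (fun x => ((x.1 : Fin k) : ℕ)) h

variable {G : SimpleGraph V} {H : SimpleGraph (Fin k)}

lemma adj_cases {a b : TPVert V k} (h : (treeProd G H).Adj a b) :
    (a.1 = b.1 ∧ G.Adj a.2 b.2) ∨
    (lv a < lv b ∧ (∀ t ≤ lv a, fp a t = fp b t) ∧ H.Adj a.1.1 b.1.1) ∨
    (lv b < lv a ∧ (∀ t ≤ lv b, fp b t = fp a t) ∧ H.Adj b.1.1 a.1.1) := by
  rw [treeProd, fromRel_adj] at h
  have key : ∀ x y : TPVert V k,
      (∃ hij : (x.1.1 : ℕ) < (y.1.1 : ℕ),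
        (∀ t : Fin x.1.1, x.1.2 t = y.1.2 ⟨t, t.2.trans hij⟩) ∧
        x.2 = y.1.2 ⟨x.1.1, hij⟩ ∧ H.Adj x.1.1 y.1.1) →
      lv x < lv y ∧ (∀ t ≤ lv x, fp x t = fp y t) ∧ H.Adj x.1.1 y.1.1 := by
    rintro x y ⟨hij, hpre, hval, hH⟩
    refine ⟨hij, ?_, hH⟩
    intro t ht
    rcases lt_or_eq_of_le ht with hlt | heq
    · rw [fp_lt hlt, fp_lt (hlt.trans hij)]
      exact hpre ⟨t, hlt⟩
    · subst heq
      rw [fp_ge le_rfl, fp_lt hij]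
      exact hval
  rcases h.2 with (⟨h1, h2⟩ | hp) | (⟨h1, h2⟩ | hp)
  · exact Or.inl ⟨h1, h2⟩
  · exact Or.inr (Or.inl (key a b hp))
  · exact Or.inl ⟨h1.symm, h2.symm⟩
  · exact Or.inr (Or.inr (key b a hp))

lemma adj_fp {a b : TPVert V k} (h : (treeProd G H).Adj a b) {t : ℕ}
    (ha : t < lv a) (hb : t < lv b) : fp a t = fp b t := by
  rcases adj_cases h with ⟨h1, _⟩ | ⟨_, h2, _⟩ | ⟨_, h2, _⟩
  · exact copy_fp h1 ha
  · exact h2 t ha.le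
  · exact (h2 t hb.le).symm

/-- subtree below the copy at level `m` on path `p` -/
def SubT (m : ℕ) (p : ℕ → V) : Set (TPVert V k) :=
  {z | m ≤ lv z ∧ ∀ t < m, fp z t = p t}

/-- ancestral trace of that copy -/
def AncT (m : ℕ) (p : ℕ → V) : Set (TPVert V k) :=
  {z | lv z < m ∧ ∀ t ≤ lv z, fp z t = p t}

lemma anc_eq {m : ℕ} {p : ℕ → V} {a b : TPVert V k} (ha : a ∈ AncT m p) (hb : b ∈ AncT m p)
    (h : lv a = lv b) : a = b := by
  refine vert_ext h fun t ht => ?_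
  rw [ha.2 t ht, hb.2 t (h ▸ ht)]

lemma adj_sub_or_anc {m : ℕ} {p : ℕ → V} {a b : TPVert V k} (ha : a ∈ SubT m p)
    (h : (treeProd G H).Adj a b) : b ∈ SubT m p ∨ b ∈ AncT m p := by
  rcases le_or_gt m (lv b) with hm | hm
  · exact Or.inl ⟨hm, fun t ht => (adj_fp h (ht.trans_le ha.1) (ht.trans_le hm)).symm ▸
      ((adj_fp h (ht.trans_le ha.1) (ht.trans_le hm)) ▸ ha.2 t ht)⟩
  · refine Or.inr ⟨hm, fun t ht => ?_⟩
    have hlt : lv b < lv a := hm.trans_le ha.1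
    rcases adj_cases h with ⟨h1, _⟩ | ⟨h2, _, _⟩ | ⟨_, h2, _⟩
    · exact absurd (copy_lv h1) hlt.ne'
    · omega
    · rw [h2 t ht]
      exact ha.2 t (lt_of_le_of_lt ht hm)

lemma sub_same_copy {m : ℕ} {p : ℕ → V}
    (hmk : ∀ i j : Fin k, m ≤ (i : ℕ) → m ≤ (j : ℕ) → ¬ H.Adj i j)
    {a b : TPVert V k} (ha : a ∈ SubT m p) (hb : b ∈ SubT m p)
    (h : (treeProd G H).Adj a b) : a.1 = b.1 ∧ G.Adj a.2 b.2 := by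
  rcases adj_cases h with h1 | ⟨_, _, hH⟩ | ⟨_, _, hH⟩
  · exact h1
  · exact absurd hH (hmk _ _ ha.1 hb.1)
  · exact absurd hH (hmk _ _ hb.1 ha.1)

/-- propagate a predicate along a connected induced subgraph -/
lemma connected_closure {β : Type*} {Γ : SimpleGraph β} {s : Set β}
    (hc : (Γ.induce s).Connected) (P : β → Prop) {b0 : β} (hb0 : b0 ∈ s) (h0 : P b0)
    (step : ∀ a b, a ∈ s → b ∈ s → Γ.Adj a b → P a → P b) : ∀ b ∈ s, P b := by
  intro b hb
  obtain ⟨w⟩ := hc.preconnected ⟨b0, hb0⟩ ⟨b, hb⟩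
  suffices hh : ∀ (x y : s) (_ : (Γ.induce s).Walk x y), P x → P y from hh _ _ w h0
  intro x y w
  induction w with
  | nil => exact id
  | @cons u v _ h p ih => exact fun hx => ih (step u v u.2 v.2 h hx)

lemma connected_transfer {β γ : Type*} {Γ : SimpleGraph β} {Δ : SimpleGraph γ} {s : Set β}
    (hc : (Γ.induce s).Connected) (φ : β → γ)
    (h : ∀ a ∈ s, ∀ b ∈ s, Γ.Adj a b → φ a = φ b ∨ Δ.Adj (φ a) (φ b)) :
    (Δ.induce (φ '' s)).Connected := by
  obtain ⟨⟨x0, hx0⟩⟩ := hc.nonempty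
  rw [connected_iff]
  refine ⟨?_, ⟨⟨φ x0, ⟨x0, hx0, rfl⟩⟩⟩⟩
  rintro ⟨y1, hy1⟩ ⟨y2, hy2⟩
  obtain ⟨x1, hx1, rfl⟩ := hy1
  obtain ⟨x2, hx2, rfl⟩ := hy2
  obtain ⟨w⟩ := hc.preconnected ⟨x1, hx1⟩ ⟨x2, hx2⟩
  suffices hh : ∀ (a b : s) (_ : (Γ.induce s).Walk a b),
      (Δ.induce (φ '' s)).Reachable ⟨φ a, ⟨a, a.2, rfl⟩⟩ ⟨φ b, ⟨b, b.2, rfl⟩⟩ from hh _ _ w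
  intro a b w
  induction w with
  | nil => exact SimpleGraph.Reachable.refl _
  | @cons u v _ h' p ih =>
    rcases h u u.2 v v.2 h' with he | ha
    · have : (⟨φ u, ⟨u, u.2, rfl⟩⟩ : (φ '' s : Set γ)) = ⟨φ v, ⟨v, v.2, rfl⟩⟩ :=
        Subtype.ext he
      rw [this]; exact ih
    · exact (SimpleGraph.Adj.reachable (by exact ha)).trans ih

lemma hook_mem' {β : Type*} {Γ : SimpleGraph β} {s : Set β} (hc : (Γ.induce s).Connected)
    (Q : β → Prop) (ρ : β → β)
    (h1 : ∀ a b, a ∈ s → b ∈ s → Γ.Adj a b → ¬Q a → ¬Q b → ρ a = ρ b)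
    (h2 : ∀ a b, a ∈ s → b ∈ s → Γ.Adj a b → ¬Q a → Q b → ρ a = b)
    {b0 : β} (hb0 : b0 ∈ s) (hQ0 : Q b0) :
    ∀ a ∈ s, ¬Q a → ρ a ∈ s := by
  suffices hh : ∀ (x y : s) (_ : (Γ.induce s).Walk x y), Q ↑y → ¬Q ↑x → ρ ↑x ∈ s by
    intro a ha hqa
    obtain ⟨w⟩ := hc.preconnected ⟨a, ha⟩ ⟨b0, hb0⟩
    exact hh _ _ w hQ0 hqa
  intro x y w
  induction w with
  | nil => exact fun hq hnq => absurd hq hnq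
  | @cons u v _ h p ih =>
    intro hqy hq
    by_cases hqv : Q ↑v
    · rw [h2 u v u.2 v.2 h hq hqv]; exact v.2
    · rw [h1 u v u.2 v.2 h hq hqv]; exact ih hqy hqv

lemma branch_in_sub {s : Set (TPVert V k)} (hc : ((treeProd G H).induce s).Connected)
    {z0 : TPVert V k} (hz0 : z0 ∈ s) {j : ℕ} (hlev : ∀ z ∈ s, j ≤ lv z) :
    s ⊆ SubT j (fp z0) := by
  have hcl := connected_closure hc (fun z => ∀ t < j, fp z t = fp z0 t) hz0
    (fun _ _ => rfl)
    (fun a b ha hb hadj hP t ht =>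
      (adj_fp hadj (ht.trans_le (hlev a ha)) (ht.trans_le (hlev b hb))).symm.trans (hP t ht))
  exact fun z hz => ⟨hlev z hz, hcl z hz⟩

end Helpers

theorem treeProd_connected_minor {V : Type} [Fintype V] [DecidableEq V]
    (G : SimpleGraph V) {k : ℕ} (H : SimpleGraph (Fin k))
    (hn : 2 ≤ Fintype.card V)
    (q : ℕ) (hq : q ≤ k)
    (hind : ∀ i j : Fin k, k - q ≤ (i : ℕ) → k - q ≤ (j : ℕ) → ¬ H.Adj i j)
    {W : Type} [Fintype W] (F : SimpleGraph W)
    (hminor : IsMinor F (treeProd G H))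
    (hconn : IsKConnected (k - q + 1) F) :
    ∃ X : Finset W, X.card ≤ k - q ∧ IsMinor (F.induce ((↑X : Set W)ᶜ)) G := by
  classical
  obtain ⟨f, hne, hconn', hdisj, hadj⟩ := hminor
  obtain ⟨hcard, hconn2⟩ := hconn
  have hWne : Nonempty W := Fintype.card_pos_iff.mp (by omega)
  rcases Nat.eq_zero_or_pos k with hk0 | hk1
  · exfalso
    obtain ⟨z, hz⟩ := hne (Classical.arbitrary W)
    have := z.1.1.2
    omega
  set m := min (k - q) (k - 1) with hmdef
  have hm1 : m ≤ k - q := min_le_left _ _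
  have hm2 : m ≤ k - 1 := min_le_right _ _
  have hmk : m < k := by omega
  have hmH : ∀ i j : Fin k, m ≤ (i : ℕ) → m ≤ (j : ℕ) → ¬ H.Adj i j := by
    intro i j hi hj hadjH
    have hik := i.2
    have hjk2 := j.2
    rcases min_cases (k - q) (k - 1) with ⟨he, _⟩ | ⟨he, _⟩
    · exact hind i j (by omega) (by omega) hadjH
    · have : i = j := Fin.ext (by omega)
      exact H.irrefl (this ▸ hadjH)
  -- minimum level of a branch set
  set jlev : W → ℕ := fun w => sInf {n | ∃ z ∈ f w, lv z = n} with hjlevdef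
  have hjne : ∀ w, {n | ∃ z ∈ f w, lv z = n}.Nonempty := by
    intro w
    obtain ⟨z, hz⟩ := hne w
    exact ⟨lv z, z, hz, rfl⟩
  have hjmem : ∀ w, ∃ z ∈ f w, lv z = jlev w := fun w => Nat.sInf_mem (hjne w)
  have hjle : ∀ w, ∀ z ∈ f w, jlev w ≤ lv z := fun w z hz => Nat.sInf_le ⟨z, hz, rfl⟩
  -- main machine: build the deletion set X and spread containment
  have hmain : ∀ (j : ℕ), j ≤ k - q → ∀ (p : ℕ → V) (w0 : W), f w0 ⊆ SubT j p →
      ∃ X : Finset W, X.card ≤ j ∧ w0 ∉ X ∧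
        (∀ w', (∃ a ∈ AncT j p, a ∈ f w') → w' ∈ X) ∧
        (F.induce ((↑X : Set W)ᶜ)).Connected ∧
        ∀ w', w' ∉ X → f w' ⊆ SubT j p := by
    intro j hj p w0 hw0sub
    set X : Finset W := Finset.univ.filter (fun w' => ∃ a ∈ AncT j p, a ∈ f w') with hXdef
    have hXin : ∀ w', (∃ a ∈ AncT j p, a ∈ f w') → w' ∈ X := fun w' h =>
      Finset.mem_filter.2 ⟨Finset.mem_univ _, h⟩
    have hXcard : X.card ≤ j := by
      have hcle : X.card ≤ (Finset.range j).card := by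
        apply Finset.card_le_card_of_injOn
          (fun w' => if h : ∃ a ∈ AncT j p, a ∈ f w' then lv h.choose else 0)
        · intro w' hw'
          have h := (Finset.mem_filter.1 hw').2
          simp only [dif_pos h]
          exact Finset.mem_range.2 h.choose_spec.1.1
        · intro w1 h1 w2 h2 he
          have hh1 := (Finset.mem_filter.1 (Finset.mem_coe.1 h1)).2
          have hh2 := (Finset.mem_filter.1 (Finset.mem_coe.1 h2)).2
          simp only [dif_pos hh1, dif_pos hh2] at he
          have heq : hh1.choose = hh2.choose := anc_eq hh1.choose_spec.1 hh2.choose_spec.1 he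
          by_contra hne'
          exact Set.disjoint_left.1 (hdisj w1 w2 hne') hh1.choose_spec.2
            (heq ▸ hh2.choose_spec.2)
      simpa using hcle
    have hw0X : w0 ∉ X := by
      intro hw0
      obtain ⟨a, haA, haf⟩ := (Finset.mem_filter.1 hw0).2
      have h1 := (hw0sub haf).1
      have h2 := haA.1
      omega
    have hcF : (F.induce ((↑X : Set W)ᶜ)).Connected := hconn2 X (by omega)
    have hsubpres : ∀ w', w' ∉ X → ∀ z2, z2 ∈ f w' → z2 ∈ SubT j p → f w' ⊆ SubT j p := by
      intro w' hw' z2 hz2 hz2s z hz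
      refine connected_closure (hconn' w') (· ∈ SubT j p) hz2 hz2s ?_ z hz
      intro a b _ hb hab hPa
      rcases adj_sub_or_anc hPa hab with h | h
      · exact h
      · exact absurd (hXin w' ⟨b, h, hb⟩) hw'
    refine ⟨X, hXcard, hw0X, hXin, hcF, ?_⟩
    intro w' hw'
    refine connected_closure hcF (fun w'' => f w'' ⊆ SubT j p)
      (show w0 ∈ ((↑X : Set W)ᶜ) by simpa using hw0X) hw0sub ?_ w' (by simpa using hw')
    intro w1 w2 _ h2 h12 hP1
    obtain ⟨z1, hz1, z2, hz2, hTadj⟩ := hadj h12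
    have h2' : w2 ∉ X := by simpa using h2
    rcases adj_sub_or_anc (hP1 hz1) hTadj with h | h
    · exact hsubpres w2 h2' z2 hz2 h
    · exact absurd (hXin w2 ⟨z2, h, hz2⟩) h2'
  by_cases hA : ∃ w, m ≤ jlev w
  -- Case A: some branch set lives entirely at levels ≥ m
  · obtain ⟨w0, hw0m⟩ := hA
    obtain ⟨z0, hz0⟩ := hne w0
    have hlevw0 : ∀ z ∈ f w0, m ≤ lv z := fun z hz => le_trans hw0m (hjle w0 z hz)
    have hsub0 : f w0 ⊆ SubT m (fp z0) := branch_in_sub (hconn' w0) hz0 hlevw0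
    obtain ⟨X, hXc, hw0X, hXin, hcF, hall⟩ := hmain m hm1 (fp z0) w0 hsub0
    have hmemc : ∀ w' : ((↑X : Set W)ᶜ : Set W), (w' : W) ∉ X :=
      fun w' h => w'.2 (Finset.mem_coe.mpr h)
    have branch_copy : ∀ w', f w' ⊆ SubT m (fp z0) → ∀ z2, z2 ∈ f w' → z2.1 = z0.1 →
        ∀ z ∈ f w', z.1 = z0.1 := by
      intro w' hsub z2 hz2 hz2c
      refine connected_closure (hconn' w') (fun z => z.1 = z0.1) hz2 hz2c ?_
      intro a b ha hb hab hPa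
      exact ((sub_same_copy hmH (hsub ha) (hsub hb) hab).1).symm.trans hPa
    have hcopy : ∀ w', w' ∉ X → ∀ z ∈ f w', z.1 = z0.1 := by
      intro w' hw'
      refine connected_closure hcF (fun w'' => ∀ z ∈ f w'', z.1 = z0.1)
        (show w0 ∈ ((↑X : Set W)ᶜ) by simpa using hw0X)
        (branch_copy w0 hsub0 z0 hz0 rfl) ?_ w' (by simpa using hw')
      intro w1 w2 h1 h2 h12 hP1
      obtain ⟨z1, hz1, z2, hz2, hTadj⟩ := hadj h12
      have h1' : w1 ∉ X := by simpa using h1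
      have h2' : w2 ∉ X := by simpa using h2
      have hz2c : z2.1 = z0.1 :=
        ((sub_same_copy hmH (hall w1 h1' hz1) (hall w2 h2' hz2) hTadj).1).symm.trans
          (hP1 z1 hz1)
      exact branch_copy w2 (hall w2 h2') z2 hz2 hz2c
    refine ⟨X, hXc.trans hm1, ?_⟩
    refine ⟨fun w' => (fun z => z.2) '' f ↑w', fun w' => (hne _).image _, ?_, ?_, ?_⟩
    · intro w'
      refine connected_transfer (hconn' ↑w') (fun z => z.2) ?_
      intro a ha b hb hab
      exact Or.inr (sub_same_copy hmH (hall _ (hmemc w') ha) (hall _ (hmemc w') hb) hab).2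
    · intro w1 w2 hne12
      rw [Set.disjoint_left]
      rintro v ⟨z1, hz1, rfl⟩ ⟨z2, hz2, he⟩
      have hc1 : z1.1 = z0.1 := hcopy _ (hmemc w1) z1 hz1
      have hc2 : z2.1 = z0.1 := hcopy _ (hmemc w2) z2 hz2
      have hzz : z2 = z1 := Prod.ext (hc2.trans hc1.symm) he
      exact Set.disjoint_left.1 (hdisj ↑w1 ↑w2 (fun e => hne12 (Subtype.ext e))) hz1
        (hzz ▸ hz2)
    · intro w1 w2 h12
      have h12' : F.Adj ↑w1 ↑w2 := h12
      obtain ⟨z1, hz1, z2, hz2, hT⟩ := hadj h12'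
      exact ⟨z1.2, ⟨z1, hz1, rfl⟩, z2.2, ⟨z2, hz2, rfl⟩,
        (sub_same_copy hmH (hall _ (hmemc w1) hz1) (hall _ (hmemc w2) hz2) hT).2⟩
  -- Case B: every branch set reaches below level m
  · push_neg at hA
    obtain ⟨ws, -, hmax⟩ := Finset.exists_max_image Finset.univ jlev
      ⟨Classical.arbitrary W, Finset.mem_univ _⟩
    have hmax' : ∀ w, jlev w ≤ jlev ws := fun w => hmax w (Finset.mem_univ w)
    set js := jlev ws with hjsdef
    have hjm : js < m := hA ws
    have hjk : js < k := by omega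
    obtain ⟨zs, hzs, hzslv⟩ := hjmem ws
    have hsubws : f ws ⊆ SubT js (fp zs) :=
      branch_in_sub (hconn' ws) hzs (fun z hz => hjle ws z hz)
    obtain ⟨X, hXc, hwsX, hXin, hcF, hall⟩ := hmain js (by omega) (fp zs) ws hsubws
    have hmemc : ∀ w' : ((↑X : Set W)ᶜ : Set W), (w' : W) ∉ X :=
      fun w' h => w'.2 (Finset.mem_coe.mpr h)
    set ρ : TPVert V k → TPVert V k := fun z =>
      if h : lv z ≤ js then z
      else (⟨⟨js, hjk⟩, fun t => fp z t⟩, fp z js) with hρdef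
    have hρfix : ∀ z, lv z = js → ρ z = z := by
      intro z h
      simp only [hρdef]
      rw [dif_pos h.le]
    have hρlv : ∀ z : TPVert V k, lv (ρ z) = js ∨ ρ z = z := by
      intro z
      by_cases h : lv z ≤ js
      · right; simp only [hρdef]; rw [dif_pos h]
      · left; simp only [hρdef]; rw [dif_neg h]
    have hρlv' : ∀ z : TPVert V k, js ≤ lv z → lv (ρ z) = js := by
      intro z h
      by_cases h' : lv z ≤ js
      · have : lv z = js := le_antisymm h' h
        rw [hρfix z this, this]
      · simp only [hρdef]; rw [dif_neg h']
    have hρfp : ∀ z : TPVert V k, ∀ t ≤ js, fp (ρ z) t = fp z t := by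
      intro z t ht
      by_cases h' : lv z ≤ js
      · simp only [hρdef]; rw [dif_pos h']
      · simp only [hρdef]; rw [dif_neg h']
        rcases lt_or_eq_of_le ht with hlt | he
        · exact @fp_lt V k (⟨⟨js, hjk⟩, fun t => fp z t⟩, fp z js) t hlt
        · subst he
          exact @fp_ge V k (⟨⟨js, hjk⟩, fun t => fp z t⟩, fp z js) js le_rfl
    have hρsub : ∀ z ∈ SubT js (fp zs), ρ z ∈ SubT js (fp zs) := by
      intro z hz
      exact ⟨(hρlv' z hz.1).ge, fun t ht => (hρfp z t ht.le).trans (hz.2 t ht)⟩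
    have hL5 : ∀ z z', z ∈ SubT js (fp zs) → z' ∈ SubT js (fp zs) →
        (treeProd G H).Adj z z' →
        ρ z = ρ z' ∨ (lv z = js ∧ lv z' = js ∧ G.Adj z.2 z'.2) := by
      intro z z' hz hz' hT
      rcases eq_or_lt_of_le hz.1 with hze | hzl
      · rcases eq_or_lt_of_le hz'.1 with hze' | hzl'
        · right
          refine ⟨hze.symm, hze'.symm, ?_⟩
          rcases adj_cases hT with ⟨_, h2⟩ | ⟨hlt, _, _⟩ | ⟨hlt, _, _⟩
          · exact h2
          · omega
          · omega
        · left
          rw [hρfix z hze.symm]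
          have hpre : ∀ t ≤ js, fp z t = fp z' t := by
            rcases adj_cases hT with ⟨h1, _⟩ | ⟨_, h2, _⟩ | ⟨hlt, _, _⟩
            · exact absurd (copy_lv h1) (by omega)
            · intro t ht; exact h2 t (by omega)
            · omega
          refine (vert_ext ?_ ?_).symm
          · rw [hρlv' z' hz'.1, hze]
          · intro t ht
            rw [hρlv' z' hz'.1] at ht
            rw [hρfp z' t ht]
            exact (hpre t ht).symm
      · rcases eq_or_lt_of_le hz'.1 with hze' | hzl'
        · left
          rw [hρfix z' hze'.symm]
          have hpre : ∀ t ≤ js, fp z' t = fp z t := by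
            rcases adj_cases hT with ⟨h1, _⟩ | ⟨hlt, _, _⟩ | ⟨_, h2, _⟩
            · exact absurd (copy_lv h1) (by omega)
            · omega
            · intro t ht; exact h2 t (by omega)
          refine vert_ext ?_ ?_
          · rw [hρlv' z hz.1, hze']
          · intro t ht
            rw [hρlv' z hz.1] at ht
            rw [hρfp z t ht]
            exact (hpre t ht).symm
        · left
          refine vert_ext ?_ ?_
          · rw [hρlv' z hz.1, hρlv' z' hz'.1]
          · intro t ht
            rw [hρlv' z hz.1] at ht
            rw [hρfp z t ht, hρfp z' t ht]
            exact adj_fp hT (by omega) (by omega)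
    have hlev0 : ∀ w', w' ∉ X → ∃ z0 ∈ f w', lv z0 = js := by
      intro w' hw'
      obtain ⟨z0, hz0, hlv0⟩ := hjmem w'
      refine ⟨z0, hz0, le_antisymm ?_ (hall w' hw' hz0).1⟩
      rw [hlv0]
      exact hmax' w'
    have hhook : ∀ w', w' ∉ X → ∀ z ∈ f w', ρ z ∈ f w' := by
      intro w' hw' z hz
      by_cases hq' : lv z = js
      · rw [hρfix z hq']; exact hz
      · obtain ⟨z0, hz0, hlv0⟩ := hlev0 w' hw'
        refine hook_mem' (hconn' w') (fun z => lv z = js) ρ ?_ ?_ hz0 hlv0 z hz hq'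
        · intro a b ha hb hab hqa hqb
          rcases hL5 a b (hall w' hw' ha) (hall w' hw' hb) hab with h | ⟨h, _, _⟩
          · exact h
          · exact absurd h hqa
        · intro a b ha hb hab hqa hqb
          rcases hL5 a b (hall w' hw' ha) (hall w' hw' hb) hab with h | ⟨h, _, _⟩
          · rw [h, hρfix b hqb]
          · exact absurd h hqa
    refine ⟨X, by omega, ?_⟩
    refine ⟨fun w' => (fun z => (ρ z).2) '' f ↑w', fun w' => (hne _).image _, ?_, ?_, ?_⟩
    · intro w'
      refine connected_transfer (hconn' ↑w') (fun z => (ρ z).2) ?_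
      intro a ha b hb hab
      rcases hL5 a b (hall _ (hmemc w') ha) (hall _ (hmemc w') hb) hab with h | ⟨h1, h2, h3⟩
      · exact Or.inl (congrArg Prod.snd h)
      · right
        show G.Adj (ρ a).2 (ρ b).2
        rw [hρfix a h1, hρfix b h2]
        exact h3
    · intro w1 w2 hne12
      rw [Set.disjoint_left]
      rintro v ⟨z1, hz1, rfl⟩ ⟨z2, hz2, he⟩
      have h1s := hall _ (hmemc w1) hz1
      have h2s := hall _ (hmemc w2) hz2
      have hzz : ρ z2 = ρ z1 := by
        refine vert_ext ?_ ?_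
        · rw [hρlv' z2 h2s.1, hρlv' z1 h1s.1]
        · intro t ht
          rw [hρlv' z2 h2s.1] at ht
          rcases lt_or_eq_of_le ht with hlt | heq
          · rw [hρfp z2 t ht, hρfp z1 t ht, h2s.2 t hlt, h1s.2 t hlt]
          · subst heq
            rw [fp_ge (le_of_eq (hρlv' z2 h2s.1)), fp_ge (le_of_eq (hρlv' z1 h1s.1))]
            exact he
      have hm1' := hhook _ (hmemc w1) z1 hz1
      have hm2' := hhook _ (hmemc w2) z2 hz2
      exact Set.disjoint_left.1 (hdisj ↑w1 ↑w2 (fun e => hne12 (Subtype.ext e))) hm1'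
        (hzz ▸ hm2')
    · intro w1 w2 h12
      have h12' : F.Adj ↑w1 ↑w2 := h12
      obtain ⟨z1, hz1, z2, hz2, hT⟩ := hadj h12'
      rcases hL5 z1 z2 (hall _ (hmemc w1) hz1) (hall _ (hmemc w2) hz2) hT with h | ⟨h1, h2, h3⟩
      · exfalso
        have hm1' := hhook _ (hmemc w1) z1 hz1
        have hm2' := hhook _ (hmemc w2) z2 hz2
        exact Set.disjoint_left.1 (hdisj ↑w1 ↑w2 h12'.ne) hm1' (h ▸ hm2')
      · refine ⟨(ρ z1).2, ⟨z1, hz1, rfl⟩, (ρ z2).2, ⟨z2, hz2, rfl⟩, ?_⟩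
        rw [hρfix z1 h1, hρfix z2 h2]
        exact h3
end

section
/- Let R be a graph with two distinct non-adjacent vertices u and v such that R is 3-colorable and every proper 3-coloring of R assigns u and v the same color. Let G_1 be any graph, and let G_2 be obtained from G_1 by replacing each edge xy of G_1 by a fresh copy of R whose vertex u is identified with x, together with a new edge joining the copy's vertex v to y (the original edge xy is removed). Then G_2 is 3-colorable if and only if G_1 is 3-colorable; moreover, if R is triangle-free, then G_2 is triangle-free. -/
open SimpleGraph

/-- The graph obtained from a graph `G1` whose edges are oriented by the relation `D`
(so `x ~ y` in `G1` iff `D x y ∨ D y x`) by replacing each edge `xy` (with `D x y`)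
by a fresh copy of `R` whose vertex `u` is identified with `x`, together with a new
edge joining the copy's vertex `v` to `y`; the original edges of `G1` are removed. -/
def hajosExpand {V1 VR : Type*} (D : V1 → V1 → Prop)
    (R : SimpleGraph VR) (u v : VR) :
    SimpleGraph (V1 ⊕ ({e : V1 × V1 // D e.1 e.2} × {w : VR // w ≠ u})) :=
  SimpleGraph.fromRel (fun a b =>
    match a, b with
    | Sum.inl x, Sum.inr (e, w) => ((e : V1 × V1).1 = x ∧ R.Adj u (w : VR)) ∨
        ((e : V1 × V1).2 = x ∧ (w : VR) = v)
    | Sum.inr (e, w), Sum.inr (e', w') => e = e' ∧ R.Adj (w : VR) (w' : VR)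
    | _, _ => False)

section Aux

variable {V1 VR : Type*} {D : V1 → V1 → Prop} {R : SimpleGraph VR} {u v : VR}

lemma hajos_adj_ll {x y : V1} : ¬ (hajosExpand D R u v).Adj (Sum.inl x) (Sum.inl y) := by
  simp [hajosExpand, SimpleGraph.fromRel_adj]

lemma hajos_adj_lr {x : V1} {e : {e : V1 × V1 // D e.1 e.2}} {w : {w : VR // w ≠ u}} :
    (hajosExpand D R u v).Adj (Sum.inl x) (Sum.inr (e, w)) ↔
      ((e : V1 × V1).1 = x ∧ R.Adj u (w : VR)) ∨ ((e : V1 × V1).2 = x ∧ (w : VR) = v) := by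
  simp [hajosExpand, SimpleGraph.fromRel_adj]

lemma hajos_adj_rr {e e' : {e : V1 × V1 // D e.1 e.2}} {w w' : {w : VR // w ≠ u}} :
    (hajosExpand D R u v).Adj (Sum.inr (e, w)) (Sum.inr (e', w')) ↔
      e = e' ∧ R.Adj (w : VR) (w' : VR) := by
  constructor
  · rintro ⟨hne, (⟨he, ha⟩ | ⟨he, ha⟩)⟩
    · exact ⟨he, ha⟩
    · exact ⟨he.symm, ha.symm⟩
  · rintro ⟨rfl, ha⟩
    refine ⟨?_, Or.inl ⟨rfl, ha⟩⟩
    intro h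
    have : w = w' := by simpa using h
    exact R.loopless.irrefl _ (this ▸ ha)

/-- No triangle can use one original vertex and two vertices of a copy of `R`. -/
lemma hajos_no_mixed_tri (hR : R.CliqueFree 3) (hD' : ∀ x y, D x y → ¬ D y x)
    {x : V1} {e : {e : V1 × V1 // D e.1 e.2}} {w w' : {w : VR // w ≠ u}}
    (hnadj : ¬ R.Adj u v)
    (h1 : (hajosExpand D R u v).Adj (Sum.inl x) (Sum.inr (e, w)))
    (h2 : (hajosExpand D R u v).Adj (Sum.inl x) (Sum.inr (e, w')))
    (h3 : R.Adj (w : VR) (w' : VR)) : False := by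
  classical
  rcases hajos_adj_lr.1 h1 with ⟨he1, ha1⟩ | ⟨he1, hv1⟩ <;>
    rcases hajos_adj_lr.1 h2 with ⟨he2, ha2⟩ | ⟨he2, hv2⟩
  · exact hR {u, (w : VR), (w' : VR)} (is3Clique_triple_iff.2 ⟨ha1, ha2, h3⟩)
  · have hd := e.2
    rw [he1, he2] at hd
    exact hD' _ _ hd hd
  · have hd := e.2
    rw [he2, he1] at hd
    exact hD' _ _ hd hd
  · rw [hv1, hv2] at h3
    exact R.loopless.irrefl _ h3

end Aux

theorem hajosExpand_colorable_iff {V1 VR : Type} (G1 : SimpleGraph V1)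
    (R : SimpleGraph VR) (u v : VR) (huv : u ≠ v) (hnadj : ¬ R.Adj u v)
    (hRcol : R.Colorable 3)
    (hforce : ∀ C : R.Coloring (Fin 3), C u = C v)
    (D : V1 → V1 → Prop)
    (hD : ∀ x y, G1.Adj x y ↔ D x y ∨ D y x)
    (hD' : ∀ x y, D x y → ¬ D y x) :
    ((hajosExpand D R u v).Colorable 3 ↔ G1.Colorable 3) ∧
    (R.CliqueFree 3 → (hajosExpand D R u v).CliqueFree 3) := by
  classical
  have hvu : v ≠ u := Ne.symm huv
  constructor
  · constructor
    · -- hajosExpand colorable → G1 colorable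
      rintro ⟨C⟩
      have key : ∀ e : {e : V1 × V1 // D e.1 e.2},
          C (Sum.inl (e : V1 × V1).1) ≠ C (Sum.inl (e : V1 × V1).2) := by
        intro e
        set f : VR → Fin 3 := fun w =>
          if h : w = u then C (Sum.inl (e : V1 × V1).1)
          else C (Sum.inr (e, ⟨w, h⟩)) with hf
        have hproper : ∀ {a b : VR}, R.Adj a b → f a ≠ f b := by
          intro a b hab
          by_cases ha : a = u <;> by_cases hb : b = u
          · subst ha; subst hb; exact absurd hab (R.loopless.irrefl _)
          · subst ha
            simp only [hf, dif_pos rfl, dif_neg hb]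
            exact C.valid (hajos_adj_lr.2 (Or.inl ⟨rfl, hab⟩))
          · subst hb
            simp only [hf, dif_neg ha, dif_pos rfl]
            exact (C.valid (hajos_adj_lr.2 (Or.inl ⟨rfl, hab.symm⟩))).symm
          · simp only [hf, dif_neg ha, dif_neg hb]
            exact C.valid (hajos_adj_rr.2 ⟨rfl, hab⟩)
        have h1 : f u = f v := hforce (Coloring.mk f hproper)
        have h2 : f u = C (Sum.inl (e : V1 × V1).1) := by simp [hf]
        have h3 : f v = C (Sum.inr (e, ⟨v, hvu⟩)) := by simp [hf, hvu]
        have h4 : C (Sum.inl (e : V1 × V1).2) ≠ C (Sum.inr (e, ⟨v, hvu⟩)) :=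
          C.valid (hajos_adj_lr.2 (Or.inr ⟨rfl, rfl⟩))
        rw [← h2, h1, h3]
        exact Ne.symm h4
      exact ⟨Coloring.mk (fun x => C (Sum.inl x)) (by
        intro x y hxy
        rcases (hD x y).1 hxy with h | h
        · exact key ⟨(x, y), h⟩
        · exact (key ⟨(y, x), h⟩).symm)⟩
    · -- G1 colorable → hajosExpand colorable
      rintro ⟨c1⟩
      obtain ⟨CR⟩ := hRcol
      set g : (V1 ⊕ ({e : V1 × V1 // D e.1 e.2} × {w : VR // w ≠ u})) → Fin 3 :=
        fun a => match a with
          | Sum.inl x => c1 x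
          | Sum.inr (e, w) => Equiv.swap (CR u) (c1 (e : V1 × V1).1) (CR (w : VR)) with hg
      have hhalf : ∀ (x : V1) (e : {e : V1 × V1 // D e.1 e.2}) (w : {w : VR // w ≠ u}),
          (hajosExpand D R u v).Adj (Sum.inl x) (Sum.inr (e, w)) →
          g (Sum.inl x) ≠ g (Sum.inr (e, w)) := by
        intro x e w hadj
        rcases hajos_adj_lr.1 hadj with ⟨he, ha⟩ | ⟨he, hw⟩
        · subst he
          have := (Equiv.swap (CR u) (c1 (e : V1 × V1).1)).injective.ne (CR.valid ha)
          rw [Equiv.swap_apply_left] at this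
          exact this
        · subst he
          have hadj1 : G1.Adj (e : V1 × V1).1 (e : V1 × V1).2 := (hD _ _).2 (Or.inl e.2)
          show c1 (e : V1 × V1).2 ≠ Equiv.swap (CR u) (c1 (e : V1 × V1).1) (CR (w : VR))
          rw [hw, ← hforce CR, Equiv.swap_apply_left]
          exact (c1.valid hadj1).symm
      refine ⟨Coloring.mk g ?_⟩
      rintro (x | ⟨e, w⟩) (y | ⟨e', w'⟩) hadj
      · exact absurd hadj hajos_adj_ll
      · exact hhalf x e' w' hadj
      · exact (hhalf y e w hadj.symm).symm
      · obtain ⟨rfl, ha⟩ := hajos_adj_rr.1 hadj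
        exact (Equiv.swap (CR u) (c1 (e : V1 × V1).1)).injective.ne (CR.valid ha)
  · -- triangle-freeness
    intro hR t ht
    obtain ⟨a, b, c, hab, hac, hbc, rfl⟩ := is3Clique_iff.1 ht
    rcases a with x | ⟨e, w⟩ <;> rcases b with y | ⟨e', w'⟩ <;> rcases c with z | ⟨e'', w''⟩
    · exact hajos_adj_ll hab
    · exact hajos_adj_ll hab
    · exact hajos_adj_ll hac
    · -- inl, inr, inr
      obtain ⟨rfl, hww⟩ := hajos_adj_rr.1 hbc
      exact hajos_no_mixed_tri hR hD' hnadj hab hac hww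
    · exact hajos_adj_ll hbc
    · -- inr, inl, inr
      obtain ⟨rfl, hww⟩ := hajos_adj_rr.1 hac
      exact hajos_no_mixed_tri hR hD' hnadj hab.symm hbc hww
    · -- inr, inr, inl
      obtain ⟨rfl, hww⟩ := hajos_adj_rr.1 hab
      exact hajos_no_mixed_tri hR hD' hnadj hac.symm hbc.symm hww
    · -- inr, inr, inr
      obtain ⟨rfl, h1⟩ := hajos_adj_rr.1 hab
      obtain ⟨rfl, h2⟩ := hajos_adj_rr.1 hac
      obtain ⟨-, h3⟩ := hajos_adj_rr.1 hbc
      exact hR {(w : VR), (w' : VR), (w'' : VR)} (is3Clique_triple_iff.2 ⟨h1, h2, h3⟩)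
end

section
/- Let a ≤ b be positive integers and let G be a graph containing no K_{a,b} subgraph. Let A be a set of vertices of G. Then the number of vertices of V(G) ∖ A having at least a neighbors in A is at most C(|A|, a) · (b − 1), where C(n, k) denotes the binomial coefficient. -/
open SimpleGraph Finset

/-- `G` contains the complete bipartite graph `K_{a,b}` as a subgraph. -/
def HasKab {V : Type*} (G : SimpleGraph V) (a b : ℕ) : Prop :=
  ∃ A B : Finset V, Disjoint A B ∧ A.card = a ∧ B.card = b ∧
    ∀ x ∈ A, ∀ y ∈ B, G.Adj x y

theorem count_vertices_many_neighbors {V : Type} [Fintype V] [DecidableEq V]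
    (G : SimpleGraph V) [DecidableRel G.Adj]
    (a b : ℕ) (ha : 0 < a) (hab : a ≤ b) (hfree : ¬ HasKab G a b)
    (A : Finset V) :
    (Finset.univ.filter
        (fun v => v ∉ A ∧ a ≤ (A.filter (fun y => G.Adj v y)).card)).card
      ≤ A.card.choose a * (b - 1) := by
  classical
  set T := Finset.univ.filter
      (fun v => v ∉ A ∧ a ≤ (A.filter (fun y => G.Adj v y)).card) with hT
  have hexists : ∀ v ∈ T, ∃ S : Finset V,
      S ⊆ A.filter (fun y => G.Adj v y) ∧ S.card = a := by
    intro v hv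
    rw [hT, Finset.mem_filter] at hv
    exact Finset.exists_subset_card_eq hv.2.2
  choose f hf1 hf2 using hexists
  have key : T.card ≤ (b - 1) * (A.powersetCard a).card := by
    apply Finset.card_le_mul_card_image_of_maps_to
        (f := fun v => if h : v ∈ T then f v h else ∅)
    · intro v hv
      simp only [dif_pos hv]
      rw [Finset.mem_powersetCard]
      exact ⟨(hf1 v hv).trans (Finset.filter_subset _ _), hf2 v hv⟩
    · intro S hS
      by_contra hcon
      push_neg at hcon
      have hb : b ≤ (T.filter fun x => (if h : x ∈ T then f x h else ∅) = S).card := by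
        omega
      obtain ⟨B', hB'sub, hB'card⟩ := Finset.exists_subset_card_eq hb
      apply hfree
      refine ⟨S, B', ?_, ?_, hB'card, ?_⟩
      · rw [Finset.disjoint_left]
        intro x hxS hxB
        have hx := hB'sub hxB
        rw [Finset.mem_filter] at hx
        have hxT := hx.1
        rw [hT, Finset.mem_filter] at hxT
        rw [Finset.mem_powersetCard] at hS
        exact hxT.2.1 (hS.1 hxS)
      · rw [Finset.mem_powersetCard] at hS; exact hS.2
      · intro x hxS y hyB
        have hy := hB'sub hyB
        rw [Finset.mem_filter] at hy
        have hyT := hy.1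
        rw [dif_pos hyT] at hy
        have : x ∈ f y hyT := hy.2 ▸ hxS
        have := hf1 y hyT this
        rw [Finset.mem_filter] at this
        exact this.2.symm
  calc T.card ≤ (b - 1) * (A.powersetCard a).card := key
    _ = A.card.choose a * (b - 1) := by
        rw [Finset.card_powersetCard, Nat.mul_comm]
end
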